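/- Let p be a prime, A ⊆ 𝔽_p nonempty, and m an integer with 1 ≤ m < p. Let B = {1,…,m} ⊆ 𝔽_p (residues of the integers 1,…,m). Suppose that for every d ∈ 𝔽_p with d ≠ 0 and every t ∈ 𝔽_p there exist a ∈ A and b ∈ B with b = d·a + t (i.e., every non-horizontal line in 𝔽_p² meets A × B). Set k := |A|·m − p + 1. Then there exist polynomials g, h ∈ 𝔽_p[X] with deg g ≤ k and deg h ≤ k such that ∏_{a ∈ A} (X + a)^m = X^p · g(X) + h(X). -/

import Mathlib

open Polynomial Finset

private lemma coeff_linear_mul {R : Type*} [CommRing R] (q : R) (P : R[X]) (i : ℕ) :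
    ((X + C q) * P).coeff i = (if i = 0 then 0 else P.coeff (i - 1)) + q * P.coeff i := by
  rw [add_mul, coeff_add, coeff_C_mul]
  congr 1
  cases i with
  | zero => simp [mul_coeff_zero]
  | succ n => simp [coeff_X_mul]

private lemma prod_linear_coeff_eq_zero {R : Type*} [CommRing R] [Nontrivial R] {ι : Type*}
    (s : Finset ι) (g : ι → R) (i : ℕ) (hi : s.card < i) :
    (∏ j ∈ s, (X + C (g j))).coeff i = 0 := by
  apply coeff_eq_zero_of_natDegree_lt
  refine lt_of_le_of_lt ?_ hi
  refine le_trans (natDegree_prod_le _ _) ?_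
  refine le_trans (Finset.sum_le_sum fun j _ => (natDegree_X_add_C (g j)).le) ?_
  simp

private lemma coeff_mul_of_natDegree_le_one {R : Type*} [CommRing R]
    (q : R[X]) (hq : q.natDegree ≤ 1) (P : R[X]) (j : ℕ) :
    (q * P).coeff (j + 1) = q.coeff 1 * P.coeff j + q.coeff 0 * P.coeff (j + 1) := by
  nth_rw 1 [eq_X_add_C_of_natDegree_le_one hq]
  rw [add_mul, coeff_add, mul_assoc, coeff_C_mul, coeff_C_mul, coeff_X_mul]

private lemma degA {R : Type*} [CommRing R] [Nontrivial R] {ι : Type*}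
    (s : Finset ι) (g : ι → R[X]) (hg : ∀ j ∈ s, (g j).natDegree ≤ 1) (i : ℕ) :
    ((∏ j ∈ s, (X + C (g j))).coeff i).natDegree ≤ s.card - i := by
  classical
  induction s using Finset.induction generalizing i with
  | empty =>
    simp only [Finset.prod_empty, coeff_one]
    split <;> simp
  | @insert a s ha ih =>
    have hg' : ∀ j ∈ s, (g j).natDegree ≤ 1 := fun j hj => hg j (Finset.mem_insert_of_mem hj)
    have hga : (g a).natDegree ≤ 1 := hg a (Finset.mem_insert_self a s)
    rw [Finset.prod_insert ha, coeff_linear_mul, Finset.card_insert_of_notMem ha]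
    refine le_trans (natDegree_add_le _ _) (max_le ?_ ?_)
    · split
      · simp
      · rename_i h0
        refine le_trans (ih hg' (i - 1)) (by omega)
    · by_cases hi : i ≤ s.card
      · have h2 := ih hg' i
        refine le_trans natDegree_mul_le ?_
        omega
      · rw [prod_linear_coeff_eq_zero s g i (by omega), mul_zero]
        simp

private lemma degB {R : Type*} [CommRing R] [Nontrivial R] {ι : Type*}
    (s : Finset ι) (g : ι → R[X]) (hg : ∀ j ∈ s, (g j).natDegree ≤ 1)
    (i : ℕ) (hi : i ≤ s.card) :
    ((∏ j ∈ s, (X + C (g j))).coeff i).coeff (s.card - i)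
      = (∏ j ∈ s, (X + C ((g j).coeff 1))).coeff i := by
  classical
  induction s using Finset.induction generalizing i with
  | empty =>
    simp only [Finset.card_empty, Nat.le_zero] at hi
    subst hi
    simp
  | @insert a s ha ih =>
    have hg' : ∀ j ∈ s, (g j).natDegree ≤ 1 := fun j hj => hg j (Finset.mem_insert_of_mem hj)
    have hga : (g a).natDegree ≤ 1 := hg a (Finset.mem_insert_self a s)
    rw [Finset.card_insert_of_notMem ha] at hi
    rw [Finset.prod_insert ha, Finset.prod_insert ha, coeff_linear_mul, coeff_linear_mul,
      Finset.card_insert_of_notMem ha, coeff_add]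
    have h2 : (g a * (∏ j ∈ s, (X + C (g j))).coeff i).coeff (s.card + 1 - i)
        = (g a).coeff 1 * (∏ j ∈ s, (X + C ((g j).coeff 1))).coeff i := by
      by_cases hi' : i ≤ s.card
      · have hc1 : s.card + 1 - i = (s.card - i) + 1 := by omega
        rw [hc1, coeff_mul_of_natDegree_le_one (g a) hga]
        have hz : ((∏ j ∈ s, (X + C (g j))).coeff i).coeff (s.card - i + 1) = 0 := by
          apply coeff_eq_zero_of_natDegree_lt
          exact lt_of_le_of_lt (degA s g hg' i) (by omega)
        rw [hz, mul_zero, add_zero, ih hg' i hi']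
      · have hi'' : i = s.card + 1 := by omega
        subst hi''
        rw [prod_linear_coeff_eq_zero s g _ (by omega),
          prod_linear_coeff_eq_zero s (fun j => (g j).coeff 1) _ (by omega)]
        simp
    rw [h2]
    congr 1
    split
    · simp
    · rename_i hi0
      have hc2 : s.card + 1 - i = s.card - (i - 1) := by omega
      rw [hc2, ih hg' (i - 1) (by omega)]

theorem stmt_4 (p : ℕ) (hp : p.Prime) (A : Finset (ZMod p)) (hA : A.Nonempty)
    (m : ℕ) (hm1 : 1 ≤ m) (hmp : m < p)
    (hline : ∀ d : ZMod p, d ≠ 0 → ∀ t : ZMod p,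
      ∃ a ∈ A, ∃ b : ℕ, 1 ≤ b ∧ b ≤ m ∧ (b : ZMod p) = d * a + t) :
    ∃ g h : Polynomial (ZMod p),
      g.natDegree ≤ A.card * m - p + 1 ∧ h.natDegree ≤ A.card * m - p + 1 ∧
      ∏ a ∈ A, (X + C a) ^ m = X ^ p * g + h := by
  classical
  haveI : Fact p.Prime := ⟨hp⟩
  have hp2 : 2 ≤ p := hp.two_le
  set N := A.card * m with hN
  set F : Polynomial (ZMod p) := ∏ a ∈ A, (X + C a) ^ m with hFdef
  set S : Finset (ZMod p × ℕ) := A ×ˢ Finset.Icc 1 m with hSdef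
  have hScard : S.card = N := by
    simp [hSdef, Nat.card_Icc, hN]
  -- the bivariate Rédei polynomial
  set G : ZMod p × ℕ → Polynomial (ZMod p) := fun z => C z.1 * X - C (z.2 : ZMod p) with hGdef
  have hG1 : ∀ z ∈ S, (G z).natDegree ≤ 1 := by
    intro z _
    refine le_trans (natDegree_sub_le _ _) (max_le ?_ ?_)
    · exact le_trans (natDegree_C_mul_le _ _) natDegree_X_le
    · simp
  have hGc : ∀ z : ZMod p × ℕ, (G z).coeff 1 = z.1 := by
    intro z
    simp [hGdef, coeff_C]
  set H : Polynomial (Polynomial (ZMod p)) := ∏ z ∈ S, (X + C (G z)) with hHdef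
  -- monic X^p - X and its factorization
  have hmonX : (X ^ p - X : (ZMod p)[X]).Monic := by
    apply monic_X_pow_sub
    rw [degree_X]
    exact_mod_cast hp.one_lt
  have hdegX : (X ^ p - X : (ZMod p)[X]).natDegree = p :=
    FiniteField.X_pow_card_sub_X_natDegree_eq _ (by omega)
  -- main divisibility statement for each nonzero d
  have main : ∀ d : ZMod p, d ≠ 0 → ∃ Q : Polynomial (ZMod p),
      (∏ z ∈ S, (X + C (z.1 * d - (z.2 : ZMod p)))) = (X ^ p - X) * Q ∧
        Q.natDegree + p = N := by
    intro d hd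
    set Hd : (ZMod p)[X] := ∏ z ∈ S, (X + C (z.1 * d - (z.2 : ZMod p))) with hHd
    have hHdmonic : Hd.Monic := monic_prod_of_monic _ _ fun z _ => monic_X_add_C _
    have hHdne : Hd ≠ 0 := hHdmonic.ne_zero
    have hHddeg : Hd.natDegree = N := by
      rw [hHd, natDegree_prod _ _ fun z _ => (monic_X_add_C _).ne_zero,
        Finset.sum_congr rfl fun z _ => natDegree_X_add_C _, Finset.sum_const, smul_eq_mul,
        mul_one, hScard]
    have hroot : ∀ t : ZMod p, Hd.IsRoot t := by
      intro t
      obtain ⟨a, haA, b, hb1, hbm, hbe⟩ := hline d hd t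
      rw [IsRoot, hHd, eval_prod]
      refine Finset.prod_eq_zero (i := (a, b))
        (Finset.mem_product.2 ⟨haA, Finset.mem_Icc.2 ⟨hb1, hbm⟩⟩) ?_
      simp only [eval_add, eval_X, eval_C]
      rw [hbe]
      ring
    have hdvd : (X ^ p - X : (ZMod p)[X]) ∣ Hd := by
      have hroots : (X ^ p - X : (ZMod p)[X]).roots = Finset.univ.val := by
        have h := FiniteField.roots_X_pow_card_sub_X (ZMod p)
        rwa [ZMod.card p] at h
      have hsplits : (X ^ p - X : (ZMod p)[X]).Splits := by
        rw [splits_iff_card_roots, hdegX, hroots]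
        simp [ZMod.card]
      have hprod := hsplits.eq_prod_roots_of_monic hmonX
      rw [hprod, hroots, Multiset.prod_X_sub_C_dvd_iff_le_roots hHdne]
      rw [Multiset.le_iff_count]
      intro t
      rw [count_roots]
      have h1 : Finset.univ.val.count t ≤ 1 :=
        Multiset.nodup_iff_count_le_one.mp Finset.univ.nodup t
      exact le_trans h1 ((rootMultiplicity_pos hHdne).mpr (hroot t))
    obtain ⟨Q, hQ⟩ := hdvd
    refine ⟨Q, hQ, ?_⟩
    have hQne : Q ≠ 0 := by
      rintro rfl
      rw [mul_zero] at hQ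
      exact hHdne hQ
    have := natDegree_mul (hmonX.ne_zero) hQne
    rw [← hQ, hHddeg, hdegX] at this
    omega
  have hNp : p ≤ N := by
    obtain ⟨Q, _, hQd⟩ := main 1 one_ne_zero
    omega
  -- key coefficient vanishing
  have key : ∀ i, N - p + 1 < i → i < p → F.coeff i = 0 := by
    intro i hk hip
    set σ : Polynomial (ZMod p) := H.coeff i with hσ
    have hσdeg : σ.natDegree ≤ N - i := by
      rw [hσ, hHdef]
      exact le_trans (degA S G hG1 i) (by omega)
    have hσeval : ∀ d ∈ Finset.univ.erase (0 : ZMod p), σ.eval d = 0 := by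
      intro d hd
      have hd0 : d ≠ 0 := (Finset.mem_erase.mp hd).1
      obtain ⟨Q, hQ, hQd⟩ := main d hd0
      have hmap : H.map (evalRingHom d) = ∏ z ∈ S, (X + C (z.1 * d - (z.2 : ZMod p))) := by
        rw [hHdef, Polynomial.map_prod]
        refine Finset.prod_congr rfl fun z _ => ?_
        simp [hGdef]
      have : σ.eval d = (H.map (evalRingHom d)).coeff i := by
        rw [coeff_map, hσ]
        rfl
      rw [this, hmap, hQ]
      obtain ⟨j, rfl⟩ : ∃ j, i = j + 1 := ⟨i - 1, by omega⟩
      rw [sub_mul, coeff_sub, coeff_X_mul]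
      have h1 : (X ^ p * Q).coeff (j + 1) = 0 := by
        rw [mul_comm, coeff_mul_X_pow']
        rw [if_neg (by omega)]
      have h2 : Q.coeff j = 0 := coeff_eq_zero_of_natDegree_lt (by omega)
      rw [h1, h2, sub_zero]
    have hσ0 : σ = 0 := by
      refine eq_zero_of_natDegree_lt_card_of_eval_eq_zero' σ _ hσeval ?_
      have hcard : (Finset.univ.erase (0 : ZMod p)).card = p - 1 := by
        rw [Finset.card_erase_of_mem (Finset.mem_univ _)]
        simp [ZMod.card]
      rw [hcard]
      omega
    have hFc : F.coeff i = σ.coeff (N - i) := by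
      rw [hσ, hHdef, ← hScard, degB S G hG1 i (by omega)]
      congr 1
      rw [hSdef, Finset.prod_product]
      rw [hFdef]
      refine Finset.prod_congr rfl fun a _ => ?_
      have hGa : ∀ b ∈ Finset.Icc 1 m,
          (X + C ((G (a, b)).coeff 1) : (ZMod p)[X]) = X + C a := fun b _ => by rw [hGc]
      rw [Finset.prod_congr rfl hGa, Finset.prod_const]
      congr 1
      rw [Nat.card_Icc]
      omega
    rw [hFc, hσ0, coeff_zero]
  -- assemble
  have hFdeg : F.natDegree = N := by
    rw [hFdef, natDegree_prod _ _ fun a _ => ((monic_X_add_C a).pow m).ne_zero,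
      Finset.sum_congr rfl fun a _ => by rw [natDegree_pow, natDegree_X_add_C, mul_one],
      Finset.sum_const, smul_eq_mul]
  have hXpmonic : ((X : (ZMod p)[X]) ^ p).Monic := monic_X_pow p
  refine ⟨F /ₘ X ^ p, F %ₘ X ^ p, ?_, ?_, ?_⟩
  · rw [natDegree_divByMonic F hXpmonic, natDegree_X_pow, hFdeg]
    omega
  · rw [natDegree_le_iff_coeff_eq_zero]
    intro j hj
    by_cases hjp : j < p
    · have hid := modByMonic_add_div F (X ^ p)
      have hsub : F %ₘ X ^ p = F - X ^ p * (F /ₘ X ^ p) := eq_sub_of_add_eq hid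
      rw [hsub, coeff_sub, key j hj hjp, mul_comm, coeff_mul_X_pow', if_neg (by omega)]
      ring
    · apply coeff_eq_zero_of_degree_lt
      refine lt_of_lt_of_le (degree_modByMonic_lt F hXpmonic) ?_
      rw [degree_X_pow]
      exact_mod_cast Nat.not_lt.mp hjp
  · conv_lhs => rw [← modByMonic_add_div F (X ^ p)]
    ring
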